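/- Let C be a Z2Z4-additive ACD code. Then Φ(C) and Φ(C⊥) are both linear binary codes if and only if D_C = {2u*v : u ∈ C, v ∈ C⊥} = {0}. -/

import Mathlib

open Finset

/-- The ambient mixed alphabet space `Z2^α × Z4^β`. -/
abbrev Amb (α β : ℕ) := (Fin α → ZMod 2) × (Fin β → ZMod 4)

/-- The binary space `Z2^{α+2β}`, represented as `Z2^α × Z2^β × Z2^β`
(binary part, first Gray bits, second Gray bits). -/
abbrev Bin (α β : ℕ) := (Fin α → ZMod 2) × (Fin β → ZMod 2) × (Fin β → ZMod 2)

/-- The `Z4`-valued inner product `[u,v] = 2·Σ u_i v_i + Σ u'_j v'_j`. -/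
def zinner {α β : ℕ} (u v : Amb α β) : ZMod 4 :=
  2 * ∑ i, ((u.1 i).val : ZMod 4) * ((v.1 i).val : ZMod 4) + ∑ j, u.2 j * v.2 j

/-- The dual of a subset of the mixed ambient space. -/
def zdual {α β : ℕ} (C : Set (Amb α β)) : Set (Amb α β) :=
  {v | ∀ u ∈ C, zinner u v = 0}

/-- The vector `2u*v = (0 | 2u'*v')` (componentwise product; doubling kills the binary part). -/
def star2 {α β : ℕ} (u v : Amb α β) : Amb α β :=
  (0, fun j => 2 * u.2 j * v.2 j)

/-- The usual Gray map `Z4 → Z2²`. -/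
def gray (x : ZMod 4) : ZMod 2 × ZMod 2 :=
  match x.val with
  | 0 => (0, 0)
  | 1 => (0, 1)
  | 2 => (1, 1)
  | _ => (1, 0)

/-- The extended Gray map `Φ : Z2^α × Z4^β → Z2^{α+2β}`. -/
def Phi {α β : ℕ} (u : Amb α β) : Bin α β :=
  (u.1, fun j => (gray (u.2 j)).1, fun j => (gray (u.2 j)).2)

/-- The standard binary inner product on `Z2^{α+2β}`. -/
def binner {α β : ℕ} (x y : Bin α β) : ZMod 2 :=
  ∑ i, x.1 i * y.1 i + ∑ j, x.2.1 j * y.2.1 j + ∑ j, x.2.2 j * y.2.2 j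

/-- The dual of a subset of `Z2^{α+2β}`. -/
def bdual {α β : ℕ} (S : Set (Bin α β)) : Set (Bin α β) :=
  {y | ∀ x ∈ S, binner x y = 0}

/-- A subset of `Z2^{α+2β}` is a linear binary code if it is a linear subspace. -/
def IsLinear {α β : ℕ} (S : Set (Bin α β)) : Prop :=
  ∃ M : Submodule (ZMod 2) (Bin α β), ↑M = S

/-- The set `D_C = {2u*v : u ∈ C, v ∈ C⊥}`. -/
def DC {α β : ℕ} (C : Set (Amb α β)) : Set (Amb α β) :=
  {x | ∃ u ∈ C, ∃ v ∈ zdual C, x = star2 u v}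

/-- The standard binary inner product on `Z2^n`. -/
def binner2 {n : ℕ} (u v : Fin n → ZMod 2) : ZMod 2 := ∑ i, u i * v i

/-- The dual of a subset of `Z2^n`. -/
def bdual2 {n : ℕ} (C : Set (Fin n → ZMod 2)) : Set (Fin n → ZMod 2) :=
  {v | ∀ u ∈ C, binner2 u v = 0}


section AuxLemmas

variable {α β : ℕ}

instance : Module (ZMod 4) (ZMod 2) := AddCommGroup.zmodModule (by decide)

lemma zinner_comm (u v : Amb α β) : zinner u v = zinner v u := by
  unfold zinner
  congr 1
  · congr 1
    exact Finset.sum_congr rfl fun i _ => mul_comm _ _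
  · exact Finset.sum_congr rfl fun j _ => mul_comm _ _

lemma zinner_zero_right (u : Amb α β) : zinner u 0 = 0 := by
  simp [zinner]

lemma zinner_add_right (u v w : Amb α β) :
    zinner u (v + w) = zinner u v + zinner u w := by
  have key2 : ∀ a b c : ZMod 2,
      2 * ((a.val : ZMod 4) * (((b + c)).val : ZMod 4)) =
        2 * ((a.val : ZMod 4) * ((b).val : ZMod 4)) +
          2 * ((a.val : ZMod 4) * ((c).val : ZMod 4)) := by decide
  unfold zinner
  simp only [Prod.fst_add, Prod.snd_add, Pi.add_apply, mul_add, Finset.mul_sum,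
    Finset.sum_add_distrib]
  rw [Finset.sum_congr rfl fun i _ => key2 (u.1 i) (v.1 i) (w.1 i), Finset.sum_add_distrib]
  abel

/-- `zinner u ·` as an additive monoid hom. -/
def zformR (u : Amb α β) : Amb α β →+ ZMod 4 where
  toFun v := zinner u v
  map_zero' := zinner_zero_right u
  map_add' := zinner_add_right u

/-- The dual of a subgroup is a subgroup. -/
def zdualSubgroup (C : Set (Amb α β)) : AddSubgroup (Amb α β) where
  carrier := zdual C
  zero_mem' := fun u _ => zinner_zero_right u
  add_mem' := by
    intro a b ha hb u hu
    rw [zinner_add_right, ha u hu, hb u hu, add_zero]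
  neg_mem' := by
    intro a ha u hu
    have : zinner u (-a) = - zinner u a := map_neg (zformR u) a
    rw [this, ha u hu, neg_zero]

lemma mem_zdual_iff {C : Set (Amb α β)} {v : Amb α β} :
    v ∈ zdual C ↔ ∀ u ∈ C, zinner u v = 0 := Iff.rfl

/-- Every additive functional on the ambient space is represented by `zinner · v`. -/
lemma zinner_repr (F : Amb α β →+ ZMod 4) : ∃ v : Amb α β, ∀ u, zinner u v = F u := by
  classical
  set v1 : Fin α → ZMod 2 := fun i => if F (Pi.single i 1, 0) = 2 then 1 else 0 with hv1
  set v2 : Fin β → ZMod 4 := fun j => F (0, Pi.single j 1) with hv2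
  refine ⟨(v1, v2), ?_⟩
  intro u
  have hu : u = (∑ i, ((Pi.single i (u.1 i) : Fin α → ZMod 2), (0 : Fin β → ZMod 4)))
      + (∑ j, ((0 : Fin α → ZMod 2), (Pi.single j (u.2 j) : Fin β → ZMod 4))) := by
    refine Prod.ext ?_ ?_
    · simp [Prod.fst_sum, Finset.univ_sum_single]
    · simp [Prod.snd_sum, Finset.univ_sum_single]
  have hFu : F u = (∑ i, F ((Pi.single i (u.1 i) : Fin α → ZMod 2), (0 : Fin β → ZMod 4)))
      + ∑ j, F ((0 : Fin α → ZMod 2), (Pi.single j (u.2 j) : Fin β → ZMod 4)) := by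
    rw [← map_sum, ← map_sum, ← map_add, ← hu]
  rw [hFu]
  unfold zinner
  rw [Finset.mul_sum]
  congr 1
  · refine Finset.sum_congr rfl fun i _ => ?_
    have hxx : F (Pi.single i 1, 0) + F (Pi.single i 1, 0) = 0 := by
      rw [← map_add]
      have h0 : ((Pi.single i 1, 0) : Amb α β) + (Pi.single i 1, 0) = 0 := by
        refine Prod.ext ?_ (by simp)
        have h11 : (1 + 1 : ZMod 2) = 0 := by decide
        simp [← Pi.single_add, h11]
      rw [h0, map_zero]
    have hx : F (Pi.single i 1, 0) = 0 ∨ F (Pi.single i 1, 0) = 2 :=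
      (by decide : ∀ y : ZMod 4, y + y = 0 → y = 0 ∨ y = 2) _ hxx
    have hvi : (v1, v2).1 i = if F (Pi.single i 1, 0) = 2 then 1 else 0 := rfl
    rw [hvi]
    rcases (by decide : ∀ a : ZMod 2, a = 0 ∨ a = 1) (u.1 i) with h | h <;> rw [h]
    · simp
      exact (map_zero F).symm
    · rcases hx with hx | hx <;> rw [hx] <;> decide
  · refine Finset.sum_congr rfl fun j _ => ?_
    have h2 : (Pi.single j (u.2 j) : Fin β → ZMod 4) = (u.2 j).val • Pi.single j 1 := by
      rw [← Pi.single_smul]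
      simp [nsmul_eq_mul, ZMod.natCast_val, ZMod.cast_id]
    have hsingle : ((0 : Fin α → ZMod 2), (Pi.single j (u.2 j) : Fin β → ZMod 4))
        = (u.2 j).val • (((0 : Fin α → ZMod 2), (Pi.single j 1 : Fin β → ZMod 4)) : Amb α β) := by
      refine Prod.ext (by simp) ?_
      simpa using h2
    rw [hsingle, map_nsmul, nsmul_eq_mul, ZMod.natCast_val, ZMod.cast_id]

lemma baer4 : Module.Baer (ZMod 4) (ZMod 4) := by
  haveI : IsPrincipalIdealRing (ZMod 4) :=
    IsPrincipalIdealRing.of_surjective (Int.castRingHom (ZMod 4)) ZMod.intCast_surjective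
  intro I g
  obtain ⟨a, ha⟩ := Submodule.IsPrincipal.principal I
  have haI : a ∈ I := ha ▸ Submodule.mem_span_singleton_self a
  have hann : ∀ c : ZMod 4, c * a = 0 → c * g ⟨a, haI⟩ = 0 := by
    intro c hc
    have h1 : c • (⟨a, haI⟩ : I) = 0 := by
      ext
      simpa [smul_eq_mul] using hc
    calc c * g ⟨a, haI⟩ = g (c • ⟨a, haI⟩) := by rw [map_smul, smul_eq_mul]
    _ = 0 := by rw [h1, map_zero]
  obtain ⟨x, hx⟩ :=
    (by decide : ∀ a b : ZMod 4, (∀ c, c * a = 0 → c * b = 0) → ∃ x, x * a = b) a _ hann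
  refine ⟨LinearMap.toSpanSingleton (ZMod 4) (ZMod 4) x, ?_⟩
  intro z hz
  obtain ⟨c, hc⟩ := Ideal.mem_span_singleton'.mp (ha ▸ hz)
  have hz' : (⟨z, hz⟩ : I) = c • ⟨a, haI⟩ := Subtype.ext (by simp [smul_eq_mul, hc])
  rw [hz', map_smul, smul_eq_mul, ← hx, LinearMap.toSpanSingleton_apply, smul_eq_mul, ← hc]
  ring

/-- Biduality: anything orthogonal to the dual of `C` lies in `C`. -/
lemma zbidual (C : AddSubgroup (Amb α β)) (x : Amb α β)
    (hx : ∀ y ∈ zdual (C : Set (Amb α β)), zinner y x = 0) : x ∈ C := by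
  classical
  by_contra hxC
  set SC : Submodule (ZMod 4) (Amb α β) := AddSubgroup.toZModSubmodule 4 C with hSC
  set q : Amb α β ⧸ SC := Submodule.Quotient.mk x with hq
  have hq0 : q ≠ 0 := fun h => hxC ((Submodule.Quotient.mk_eq_zero SC).mp h)
  set T : ZMod 4 →ₗ[ZMod 4] (Amb α β ⧸ SC) := LinearMap.toSpanSingleton (ZMod 4) _ q with hT
  have hT1 : T 1 = q := by simp [hT, LinearMap.toSpanSingleton_apply]
  have hmem : ∀ c : ZMod 4, c ∈ LinearMap.ker T → c = 0 ∨ c = 2 := by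
    intro c hc
    rw [LinearMap.mem_ker, hT, LinearMap.toSpanSingleton_apply] at hc
    have h1 : c ≠ 1 := by
      rintro rfl
      rw [one_smul] at hc
      exact hq0 hc
    have h3 : c ≠ 3 := by
      rintro rfl
      apply hq0
      have h9 : ((3 : ZMod 4) * 3) • q = 0 := by rw [mul_smul, hc, smul_zero]
      rw [show ((3 : ZMod 4) * 3) = 1 from by decide, one_smul] at h9
      exact h9
    rcases (by decide : ∀ c : ZMod 4, c = 0 ∨ c = 1 ∨ c = 2 ∨ c = 3) c with rfl | rfl | rfl | rfl
    · exact Or.inl rfl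
    · exact absurd rfl h1
    · exact Or.inr rfl
    · exact absurd rfl h3
  set s : ZMod 4 := if (2 : ZMod 4) • q = 0 then 2 else 1 with hs
  have hs0 : s ≠ 0 := by
    rw [hs]; split <;> decide
  have hker : LinearMap.ker T ≤ LinearMap.ker (LinearMap.toSpanSingleton (ZMod 4) (ZMod 4) s) := by
    intro c hc
    rw [LinearMap.mem_ker, LinearMap.toSpanSingleton_apply, smul_eq_mul]
    rcases hmem c hc with rfl | rfl
    · exact zero_mul s
    · rw [LinearMap.mem_ker, hT, LinearMap.toSpanSingleton_apply] at hc
      rw [hs, if_pos hc]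
      decide
  set g1 : LinearMap.range T →ₗ[ZMod 4] ZMod 4 :=
    (Submodule.liftQ (LinearMap.ker T) (LinearMap.toSpanSingleton (ZMod 4) (ZMod 4) s) hker).comp
      T.quotKerEquivRange.symm.toLinearMap with hg1
  have hg1q : g1 ⟨q, ⟨1, hT1⟩⟩ = s := by
    have hqT : (⟨q, ⟨1, hT1⟩⟩ : LinearMap.range T) = ⟨T 1, LinearMap.mem_range_self T 1⟩ := Subtype.ext hT1.symm
    rw [hg1, hqT]
    simp only [LinearMap.coe_comp, Function.comp_apply, LinearEquiv.coe_coe]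
    rw [LinearMap.quotKerEquivRange_symm_apply_image, Submodule.mkQ_apply,
      Submodule.liftQ_apply, LinearMap.toSpanSingleton_apply, one_smul]
  obtain ⟨g, hg⟩ := baer4.extension_property (LinearMap.range T).subtype
    (Submodule.injective_subtype _) g1
  set F : Amb α β →ₗ[ZMod 4] ZMod 4 := g.comp SC.mkQ with hF
  have hFC : ∀ u ∈ C, F u = 0 := by
    intro u hu
    have h0 : (Submodule.Quotient.mk u : Amb α β ⧸ SC) = 0 :=
      (Submodule.Quotient.mk_eq_zero _).mpr (by exact hu)
    simp [hF, Submodule.mkQ_apply, h0]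
  have hFx : F x = s := by
    have h1 : F x = g q := rfl
    have h2 : g q = g1 ⟨q, ⟨1, hT1⟩⟩ := by
      have h3 := congrArg (fun (h : _ →ₗ[ZMod 4] ZMod 4) => h ⟨q, ⟨1, hT1⟩⟩) hg
      simpa using h3
    rw [h1, h2, hg1q]
  obtain ⟨v, hv⟩ := zinner_repr F.toAddMonoidHom
  have hvC : v ∈ zdual (C : Set (Amb α β)) := by
    intro u hu
    rw [hv u]
    exact hFC u hu
  have hfin : zinner v x = 0 := hx v hvC
  rw [zinner_comm, hv x] at hfin
  exact hs0 (by simpa [hFx] using hfin)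

/-! ### Gray map lemmas -/

lemma gray_add : ∀ a b : ZMod 4,
    gray (a + b + 2 * a * b) = ((gray a).1 + (gray b).1, (gray a).2 + (gray b).2) := by
  decide

lemma gray_inj : ∀ a b : ZMod 4, gray a = gray b → a = b := by decide

lemma Phi_zero : Phi (0 : Amb α β) = 0 := by
  have hg : gray 0 = (0, 0) := by decide
  refine Prod.ext (by simp [Phi]) (Prod.ext ?_ ?_) <;> funext j <;>
    simp [Phi, hg]

lemma Phi_add (u v : Amb α β) : Phi u + Phi v = Phi (u + v + star2 u v) := by
  refine Prod.ext ?_ (Prod.ext ?_ ?_)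
  · simp [Phi, star2]
  · funext j
    have h := congrArg Prod.fst (gray_add (u.2 j) (v.2 j))
    simp only [Phi, star2, Prod.snd_add, Pi.add_apply, Prod.fst_add]
    rw [h]
  · funext j
    have h := congrArg Prod.snd (gray_add (u.2 j) (v.2 j))
    simp only [Phi, star2, Prod.snd_add, Pi.add_apply, Prod.fst_add]
    rw [h]

lemma Phi_inj : Function.Injective (Phi (α := α) (β := β)) := by
  intro u v h
  have h1 := congrArg Prod.fst h
  have h2 := congrArg (fun x : Bin α β => x.2.1) h
  have h3 := congrArg (fun x : Bin α β => x.2.2) h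
  refine Prod.ext h1 (funext fun j => ?_)
  refine gray_inj _ _ (Prod.ext ?_ ?_)
  · exact congrFun h2 j
  · exact congrFun h3 j

/-! ### Linearity vs closure under `star2` -/

lemma bin_add_self (x : Bin α β) : x + x = 0 := by
  have h : ∀ a : ZMod 2, a + a = 0 := by decide
  refine Prod.ext ?_ (Prod.ext ?_ ?_) <;> funext i <;> simp [h]

lemma isLinear_of_closed (S : AddSubgroup (Amb α β))
    (hS : ∀ u ∈ S, ∀ v ∈ S, star2 u v ∈ S) :
    IsLinear (Phi '' (S : Set (Amb α β))) := by
  refine ⟨AddSubgroup.toZModSubmodule 2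
    { carrier := Phi '' (S : Set (Amb α β))
      zero_mem' := ⟨0, S.zero_mem, Phi_zero⟩
      add_mem' := by
        rintro _ _ ⟨u, hu, rfl⟩ ⟨v, hv, rfl⟩
        exact ⟨u + v + star2 u v, S.add_mem (S.add_mem hu hv) (hS u hu v hv),
          (Phi_add u v).symm⟩
      neg_mem' := by
        rintro _ ⟨u, hu, rfl⟩
        rw [neg_eq_of_add_eq_zero_left (bin_add_self (Phi u))]
        exact ⟨u, hu, rfl⟩ }, rfl⟩

lemma closed_of_isLinear (S : AddSubgroup (Amb α β))
    (h : IsLinear (Phi '' (S : Set (Amb α β)))) :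
    ∀ u ∈ S, ∀ v ∈ S, star2 u v ∈ S := by
  obtain ⟨M, hM⟩ := h
  intro u hu v hv
  have h1 : Phi u + Phi v ∈ (M : Set (Bin α β)) :=
    M.add_mem (show Phi u ∈ M from by rw [← SetLike.mem_coe, hM]; exact ⟨u, hu, rfl⟩)
      (show Phi v ∈ M from by rw [← SetLike.mem_coe, hM]; exact ⟨v, hv, rfl⟩)
  rw [hM] at h1
  obtain ⟨w, hw, hwEq⟩ := h1
  have hwu : w = u + v + star2 u v := Phi_inj (hwEq.trans (Phi_add u v))
  have : star2 u v = w - u - v := by rw [hwu]; abel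
  rw [this]
  exact S.sub_mem (S.sub_mem hw hu) hv

/-! ### `star2` computation lemmas -/

lemma star2_comm (u v : Amb α β) : star2 u v = star2 v u := by
  refine Prod.ext rfl (funext fun j => ?_)
  show 2 * u.2 j * v.2 j = 2 * v.2 j * u.2 j
  ring

lemma star2_zero : star2 (0 : Amb α β) 0 = 0 := by
  refine Prod.ext rfl (funext fun j => ?_)
  show 2 * (0 : Amb α β).2 j * (0 : Amb α β).2 j = 0
  simp

lemma zinner_star2 (a b c : Amb α β) :
    zinner a (star2 b c) = ∑ j, a.2 j * (2 * b.2 j * c.2 j) := by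
  unfold zinner star2
  simp

lemma zinner_star2_cyc (a b c : Amb α β) :
    zinner a (star2 b c) = zinner b (star2 c a) := by
  rw [zinner_star2, zinner_star2]
  exact Finset.sum_congr rfl fun j _ => by ring

end AuxLemmas

/-- For an ACD code `C`, `Φ(C)` and `Φ(C⊥)` are both linear iff `D_C = {0}`. -/
theorem stmt10 {α β : ℕ} (C : AddSubgroup (Amb α β))
    (hACD : ∀ x ∈ C, x ∈ zdual (C : Set (Amb α β)) → x = 0) :
    (IsLinear (Phi '' (C : Set (Amb α β))) ∧
     IsLinear (Phi '' zdual (C : Set (Amb α β)))) ↔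
      DC (C : Set (Amb α β)) = {0} := by
  have hDual : ((zdualSubgroup (C : Set (Amb α β)) : AddSubgroup (Amb α β)) : Set (Amb α β))
      = zdual (C : Set (Amb α β)) := rfl
  constructor
  · rintro ⟨hC, hD⟩
    have hSC := closed_of_isLinear C hC
    have hSD := closed_of_isLinear (zdualSubgroup (C : Set (Amb α β))) (by rw [hDual]; exact hD)
    apply Set.eq_singleton_iff_unique_mem.mpr
    constructor
    · exact ⟨0, C.zero_mem, 0, fun u _ => zinner_zero_right u, star2_zero.symm⟩
    · rintro x ⟨u, hu, w, hw, rfl⟩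
      apply hACD
      · -- star2 u w ∈ C via biduality
        apply zbidual
        intro y hy
        rw [zinner_star2_cyc y u w]
        exact (show star2 w y ∈ zdual (C : Set (Amb α β)) from hSD w hw y hy) u hu
      · -- star2 u w ∈ C⊥
        intro v hv
        rw [zinner_star2_cyc v u w, zinner_star2_cyc u w v, zinner_comm]
        exact hw (star2 v u) (by rw [star2_comm v u]; exact hSC u hu v hv)
  · intro hD
    have hz : ∀ u ∈ C, ∀ w ∈ zdual (C : Set (Amb α β)), star2 u w = 0 := by
      intro u hu w hw
      have : star2 u w ∈ DC (C : Set (Amb α β)) := ⟨u, hu, w, hw, rfl⟩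
      rw [hD] at this
      exact this
    constructor
    · apply isLinear_of_closed
      intro u hu v hv
      apply zbidual
      intro y hy
      rw [zinner_star2_cyc y u v, zinner_star2_cyc u v y, star2_comm y u,
        hz u hu y hy, zinner_zero_right]
    · have hclosed : ∀ u ∈ zdualSubgroup (C : Set (Amb α β)),
          ∀ v ∈ zdualSubgroup (C : Set (Amb α β)),
          star2 u v ∈ zdualSubgroup (C : Set (Amb α β)) := by
        intro u hu v hv c hc
        rw [zinner_star2_cyc c u v, zinner_star2_cyc u v c, hz c hc u hu,
          zinner_zero_right]
      have := isLinear_of_closed (zdualSubgroup (C : Set (Amb α β))) hclosed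
      rwa [hDual] at this
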